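/- Let τ be a finite vocabulary and N, P τ-structures. Then N and P are elementarily equivalent if and only if there exist a τ-structure R that is an elementary extension of P and an elementary embedding of N into R. -/

import Mathlib

/-!
Preservation theorems generalizing the Łoś–Tarski theorem
(Sankaran, Adsul, Chakraborty).

Conventions: a vocabulary is a `FirstOrder.Language`; following classical
model theory, all structures (and all substructures considered) are nonempty.
-/

namespace LTGen

open FirstOrder FirstOrder.Language

universe u v w

variable {L : FirstOrder.Language.{u, v}}

/-- Existentially quantify the last `m` de Bruijn variables of a bounded formula. -/
def exsN {α : Type*} : ∀ (m : ℕ) {n : ℕ}, L.BoundedFormula α (n + m) → L.BoundedFormula α n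
  | 0, _, φ => φ
  | m + 1, _, φ => exsN m φ.ex

/-- Universally quantify the last `m` de Bruijn variables of a bounded formula. -/
def allsN {α : Type*} : ∀ (m : ℕ) {n : ℕ}, L.BoundedFormula α (n + m) → L.BoundedFormula α n
  | 0, _, φ => φ
  | m + 1, _, φ => allsN m φ.all

/-- `σ` is a prenex sentence `∃x₁…x_k ∀y₁…y_m ψ` with `ψ` quantifier-free:
a Σ⁰₂ sentence with exactly `k` existential quantifiers followed only by
universal quantifiers. -/
def IsExUnivSentence (k : ℕ) (σ : L.Sentence) : Prop :=
  ∃ (m : ℕ) (ψ : L.BoundedFormula Empty (0 + k + m)), ψ.IsQF ∧ σ = exsN k (allsN m ψ)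

/-- `σ` is a prenex sentence `∀x₁…x_k ∃y₁…y_m ψ` with `ψ` quantifier-free:
a Π⁰₂ sentence with exactly `k` universal quantifiers followed only by
existential quantifiers. -/
def IsUnivExSentence (k : ℕ) (σ : L.Sentence) : Prop :=
  ∃ (m : ℕ) (ψ : L.BoundedFormula Empty (0 + k + m)), ψ.IsQF ∧ σ = allsN k (exsN m ψ)

/-- `σ` is a universal (Π⁰₁) sentence `∀x₁…x_m ψ` with `ψ` quantifier-free. -/
def IsPi1Sentence (σ : L.Sentence) : Prop :=
  ∃ (m : ℕ) (ψ : L.BoundedFormula Empty (0 + m)), ψ.IsQF ∧ σ = allsN m ψ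

/-- The sentence `φ` is preserved under substructures modulo `k`-sized cores
(`φ ∈ PSC(k)`): every model `M` of `φ` has a subset `C` of its universe of size
at most `k` such that every substructure of `M` whose universe contains `C`
is a model of `φ`. -/
def SentenceInPSC (k : ℕ) (φ : L.Sentence) : Prop :=
  ∀ (M : Type w) [L.Structure M] [Nonempty M], M ⊨ φ →
    ∃ C : Finset M, C.card ≤ k ∧
      ∀ N : L.Substructure M, ↑C ⊆ (N : Set M) → Nonempty ↥N → ↥N ⊨ φ

/-- The sentence `φ` is preserved under substructures modulo a finite core
(`φ ∈ PSC_f`). -/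
def SentenceInPSCf (φ : L.Sentence) : Prop :=
  ∀ (M : Type w) [L.Structure M] [Nonempty M], M ⊨ φ →
    ∃ C : Finset M,
      ∀ N : L.Substructure M, ↑C ⊆ (N : Set M) → Nonempty ↥N → ↥N ⊨ φ

/-- `R` is a `k`-ary cover of `M` (equivalently, `M` is a `k`-ary covered
extension of the non-empty collection `R` of substructures of `M`): every
subset of the universe of `M` of size at most `k` is contained in the universe
of some member of `R`. -/
def KaryCover (k : ℕ) {M : Type w} [L.Structure M] (R : Set (L.Substructure M)) : Prop :=
  R.Nonempty ∧ ∀ C : Finset M, C.card ≤ k → ∃ N ∈ R, (C : Set M) ⊆ (N : Set M)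

/-- `R` is a finitary cover of `M` (equivalently, `M` is a finitary covered
extension of `R`): every finite subset of the universe of `M` is contained in
the universe of some member of `R`. -/
def FinitaryCover {M : Type w} [L.Structure M] (R : Set (L.Substructure M)) : Prop :=
  R.Nonempty ∧ ∀ C : Finset M, ∃ N ∈ R, (C : Set M) ⊆ (N : Set M)

/-- The sentence `φ` is preserved under `k`-ary covered extensions
(`φ ∈ PCE(k)`). -/
def SentenceInPCE (k : ℕ) (φ : L.Sentence) : Prop :=
  ∀ (M : Type w) [L.Structure M] [Nonempty M] (R : Set (L.Substructure M)),
    KaryCover k R → (∀ N ∈ R, Nonempty ↥N ∧ ↥N ⊨ φ) → M ⊨ φ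

/-- The sentence `φ` is preserved under finitary covered extensions
(`φ ∈ PCE_f`). -/
def SentenceInPCEf (φ : L.Sentence) : Prop :=
  ∀ (M : Type w) [L.Structure M] [Nonempty M] (R : Set (L.Substructure M)),
    FinitaryCover R → (∀ N ∈ R, Nonempty ↥N ∧ ↥N ⊨ φ) → M ⊨ φ

/-- The theory `T` is preserved under substructures modulo `k`-sized cores
(`T ∈ PSC(k)`). -/
def TheoryInPSC (k : ℕ) (T : L.Theory) : Prop :=
  ∀ (M : Type w) [L.Structure M] [Nonempty M], M ⊨ T →
    ∃ C : Finset M, C.card ≤ k ∧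
      ∀ N : L.Substructure M, ↑C ⊆ (N : Set M) → Nonempty ↥N → ↥N ⊨ T

/-- The theory `T` is preserved under substructures modulo a finite core
(`T ∈ PSC_f`). -/
def TheoryInPSCf (T : L.Theory) : Prop :=
  ∀ (M : Type w) [L.Structure M] [Nonempty M], M ⊨ T →
    ∃ C : Finset M,
      ∀ N : L.Substructure M, ↑C ⊆ (N : Set M) → Nonempty ↥N → ↥N ⊨ T

/-- The theory `T` is preserved under `k`-ary covered extensions
(`T ∈ PCE(k)`). -/
def TheoryInPCE (k : ℕ) (T : L.Theory) : Prop :=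
  ∀ (M : Type w) [L.Structure M] [Nonempty M] (R : Set (L.Substructure M)),
    KaryCover k R → (∀ N ∈ R, Nonempty ↥N ∧ ↥N ⊨ T) → M ⊨ T

/-- The theory `T` is preserved under finitary covered extensions
(`T ∈ PCE_f`). -/
def TheoryInPCEf (T : L.Theory) : Prop :=
  ∀ (M : Type w) [L.Structure M] [Nonempty M] (R : Set (L.Substructure M)),
    FinitaryCover R → (∀ N ∈ R, Nonempty ↥N ∧ ↥N ⊨ T) → M ⊨ T

/-- A class `S` of `τ`-structures is preserved under substructures modulo
`k`-sized cores (`S ∈ PSC(k)`). -/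
def ClassInPSC (k : ℕ) (S : ∀ M : Type w, L.Structure M → Prop) : Prop :=
  ∀ (M : Type w) [str : L.Structure M] [Nonempty M], S M str →
    ∃ C : Finset M, C.card ≤ k ∧
      ∀ N : L.Substructure M, ↑C ⊆ (N : Set M) → Nonempty ↥N → S ↥N inferInstance

/-- A class `S` of `τ`-structures is preserved under substructures modulo a
finite core (`S ∈ PSC_f`). -/
def ClassInPSCf (S : ∀ M : Type w, L.Structure M → Prop) : Prop :=
  ∀ (M : Type w) [str : L.Structure M] [Nonempty M], S M str →
    ∃ C : Finset M,
      ∀ N : L.Substructure M, ↑C ⊆ (N : Set M) → Nonempty ↥N → S ↥N inferInstance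

/-- A class `S` of `τ`-structures is preserved under `k`-ary covered
extensions (`S ∈ PCE(k)`). -/
def ClassInPCE (k : ℕ) (S : ∀ M : Type w, L.Structure M → Prop) : Prop :=
  ∀ (M : Type w) [str : L.Structure M] [Nonempty M] (R : Set (L.Substructure M)),
    KaryCover k R → (∀ N ∈ R, Nonempty ↥N ∧ S ↥N inferInstance) → S M str

/-- A class `S` of `τ`-structures is preserved under finitary covered
extensions (`S ∈ PCE_f`). -/
def ClassInPCEf (S : ∀ M : Type w, L.Structure M → Prop) : Prop :=
  ∀ (M : Type w) [str : L.Structure M] [Nonempty M] (R : Set (L.Substructure M)),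
    FinitaryCover R → (∀ N ∈ R, Nonempty ↥N ∧ S ↥N inferInstance) → S M str

/-- `IsSigmaPi true N φ` says that `φ` is a Σ⁰_N formula: a prenex formula
whose quantifier prefix consists of `N` consecutive (possibly empty) blocks of
like quantifiers beginning with an existential block, with quantifier-free
matrix. `IsSigmaPi false N φ` says that `φ` is a Π⁰_N formula (first block
universal). `Σ⁰₀ = Π⁰₀ =` quantifier-free. The `n` de Bruijn variables of `φ`
are its free variables. -/
def IsSigmaPi : Bool → ℕ → ∀ {n : ℕ}, L.BoundedFormula Empty n → Prop
  | _, 0, _, φ => φ.IsQF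
  | b, N + 1, n, φ =>
      ∃ (m : ℕ) (ψ : L.BoundedFormula Empty (n + m)),
        IsSigmaPi (!b) N ψ ∧ φ = cond b (exsN m ψ) (allsN m ψ)

/-- The embedding `f : M ↪ N` is Σ⁰_n-elementary (its image is a
Σ⁰_n-elementary substructure of `N`): for every Σ⁰_n formula `φ(x₁,…,x_r)` and
every `r`-tuple `a` from `M`, `N ⊨ φ(f(a))` iff `M ⊨ φ(a)`. -/
def SigmaNElementary (nl : ℕ) {M N : Type*} [L.Structure M] [L.Structure N]
    (f : M ↪[L] N) : Prop :=
  ∀ (r : ℕ) (φ : L.BoundedFormula Empty r), IsSigmaPi true nl φ →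
    ∀ a : Fin r → M,
      (φ.Realize (fun x => x.elim) (f ∘ a) ↔ φ.Realize (fun x => x.elim) a)


/-- Witness: `R` (with structure `iR`) admits elementary embeddings of both
`P` and `N`; i.e. `R` is (up to isomorphism) an elementary extension of `P`
containing an elementary copy of `N`. -/
def ElemEquivWitness (N P : Type w) [L.Structure N] [L.Structure P]
    (R : Type (max u v w)) (iR : L.Structure R) : Prop :=
  letI := iR
  Nonempty (P ↪ₑ[L] R) ∧ Nonempty (N ↪ₑ[L] R)

section Amalgam

open FirstOrder.Language.BoundedFormula

/-- Realization of a bounded formula only depends on the values of the free variables. -/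
theorem realize_congr_freeVar {M : Type*} [L.Structure M] {α : Type*} [DecidableEq α] {n : ℕ}
    {φ : L.BoundedFormula α n} {v w : α → M} {xs : Fin n → M}
    (h : ∀ a ∈ φ.freeVarFinset, v a = w a) : φ.Realize v xs ↔ φ.Realize w xs := by
  have hv := BoundedFormula.realize_restrictFreeVar'
    (M := M) (φ := φ) (s := (↑φ.freeVarFinset : Set α)) subset_rfl (v := v) (xs := xs)
  have hw := BoundedFormula.realize_restrictFreeVar'
    (M := M) (φ := φ) (s := (↑φ.freeVarFinset : Set α)) subset_rfl (v := w) (xs := xs)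
  rw [← hv, ← hw]
  have : (v ∘ (↑) : (↑φ.freeVarFinset : Set α) → M) = w ∘ (↑) := by
    funext x
    exact h x x.2
  rw [this]

/-- If `N` and `P` are elementarily equivalent, then any finite subset of the elementary
diagram of `N` can be realized in `P` by interpreting the constants suitably. -/
theorem exists_realize_finset_diagram {N P : Type w} [L.Structure N] [L.Structure P]
    [Nonempty N] [Nonempty P] (h : N ≅[L] P) (S : Finset (L[[N]].Sentence))
    (hS : ↑S ⊆ L.elementaryDiagram N) :
    ∃ g : N → P, ∀ τ ∈ S, (Formula.equivSentence.symm τ).Realize g := by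
  classical
  set ψ : L.Formula N := BoundedFormula.iInf (fun τ : S => Formula.equivSentence.symm (τ : L[[N]].Sentence)) with hψ
  have hψN : ψ.Realize (id : N → N) := by
    rw [Formula.Realize, hψ, BoundedFormula.realize_iInf]
    intro ⟨τ, hτ⟩
    have : (Formula.equivSentence.symm τ).Realize (id : N → N) := by
      rw [Formula.realize_equivSentence_symm]
      exact hS hτ
    exact this
  set fv := ψ.freeVarFinset with hfv
  set f : N → Empty ⊕ Option ↥(↑fv : Set N) :=
    fun a => Sum.inr (if hh : a ∈ fv then some ⟨a, hh⟩ else none) with hf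
  set σ' : L.Sentence := (ψ.relabel f).iExs (Option ↥(↑fv : Set N)) with hσ'
  have hNσ : N ⊨ σ' := by
    rw [Sentence.Realize, hσ', Formula.realize_iExs]
    simp only [Formula.realize_relabel]
    refine ⟨fun o => o.elim (Classical.arbitrary N) Subtype.val, ?_⟩
    refine (realize_congr_freeVar fun a ha => ?_).2 hψN
    simp only [hf, Function.comp_apply, Sum.elim_inr]
    rw [dif_pos ha]
    rfl
  have hPσ : P ⊨ σ' := (h.realize_sentence σ').1 hNσ
  rw [Sentence.Realize, hσ', Formula.realize_iExs] at hPσ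
  simp only [Formula.realize_relabel] at hPσ
  obtain ⟨i, hi⟩ := hPσ
  refine ⟨fun a => Sum.elim (fun x : Empty => x.elim) i (f a), fun τ hτ => ?_⟩
  have := (BoundedFormula.realize_iInf (M := P)
    (f := fun τ : S => Formula.equivSentence.symm (τ : L[[N]].Sentence))
    (v := fun a => Sum.elim (fun x : Empty => x.elim) i (f a)) (v' := default)).1 ?_ ⟨τ, hτ⟩
  · exact this
  · exact hi

/-- Elementary amalgamation: if `N ≅[L] P`, there is a structure admitting elementary
embeddings of both. -/
theorem exists_common_elementary_extension (N P : Type w) [L.Structure N] [L.Structure P]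
    [Nonempty N] [Nonempty P] (h : N ≅[L] P) :
    ∃ (R : Type (max u v w)) (iR : L.Structure R),
      letI := iR
      Nonempty (P ↪ₑ[L] R) ∧ Nonempty (N ↪ₑ[L] R) := by
  classical
  let φP : L[[P]] →ᴸ (L[[P]])[[N]] := L[[P]].lhomWithConstants N
  let φN : L[[N]] →ᴸ (L[[P]])[[N]] := (L.lhomWithConstants P).sumMap (LHom.id (constantsOn N))
  let T : (L[[P]])[[N]].Theory :=
    φP.onTheory (L.elementaryDiagram P) ∪ φN.onTheory (L.elementaryDiagram N)
  have hsat : T.IsSatisfiable := by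
    rw [Theory.isSatisfiable_iff_isFinitelySatisfiable]
    intro T0 hT0
    -- extract the finitely many sentences from the diagram of `N` used in `T0`
    obtain ⟨S, hSdiag, hScover⟩ :
        ∃ S : Finset (L[[N]].Sentence), ↑S ⊆ L.elementaryDiagram N ∧
          ∀ σ ∈ T0, σ ∈ φP.onTheory (L.elementaryDiagram P) ∨
            ∃ τ ∈ S, σ = φN.onSentence τ := by
      refine ⟨T0.biUnion (fun σ =>
        if hh : ∃ τ ∈ L.elementaryDiagram N, φN.onSentence τ = σ
          then {hh.choose} else ∅), ?_, ?_⟩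
      · intro τ hτ
        simp only [Finset.coe_biUnion, Set.mem_iUnion, Finset.mem_coe] at hτ
        obtain ⟨σ, _, hτ⟩ := hτ
        split_ifs at hτ with hh
        · rw [Finset.mem_singleton] at hτ
          subst hτ
          exact hh.choose_spec.1
        · simp at hτ
      · intro σ hσ
        rcases hT0 hσ with hA | hB
        · exact Or.inl hA
        · obtain ⟨τ0, hτ0, hτ0'⟩ := hB
          have hh : ∃ τ ∈ L.elementaryDiagram N, φN.onSentence τ = σ := ⟨τ0, hτ0, hτ0'⟩
          refine Or.inr ⟨hh.choose, ?_, hh.choose_spec.2.symm⟩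
          rw [Finset.mem_biUnion]
          exact ⟨σ, hσ, by rw [dif_pos hh]; exact Finset.mem_singleton_self _⟩
    obtain ⟨g, hg⟩ := exists_realize_finset_diagram h S hSdiag
    letI cg : (constantsOn N).Structure P := constantsOn.structure g
    have hmodel : P ⊨ (T0 : (L[[P]])[[N]].Theory) := by
      refine ⟨fun σ hσ => ?_⟩
      rcases hScover σ hσ with hA | ⟨τ, hτS, rfl⟩
      · obtain ⟨τ, hτ, rfl⟩ := hA
        rw [LHom.realize_onSentence]
        exact hτ
      · haveI : φN.IsExpansionOn P := LHom.sumMap_isExpansionOn _ _ P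
        rw [LHom.realize_onSentence]
        have := hg τ hτS
        rwa [Formula.realize_equivSentence_symm] at this
    exact Theory.Model.isSatisfiable P
  obtain ⟨M⟩ := hsat
  haveI : M ⊨ T := M.is_model
  haveI hMP : M ⊨ φP.onTheory (L.elementaryDiagram P) :=
    this.mono Set.subset_union_left
  haveI hMN : M ⊨ φN.onTheory (L.elementaryDiagram N) :=
    this.mono Set.subset_union_right
  letI iMP : L[[P]].Structure M := φP.reduct M
  letI iMN : L[[N]].Structure M := φN.reduct M
  letI iM : L.Structure M := (L.lhomWithConstants P).reduct M
  haveI hφPexp : @LHom.IsExpansionOn _ _ φP M iMP _ := φP.isExpansionOn_reduct M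
  haveI hφNexp : @LHom.IsExpansionOn _ _ φN M iMN _ := φN.isExpansionOn_reduct M
  haveI hexpP : (L.lhomWithConstants P).IsExpansionOn M := ⟨fun _ _ => rfl, fun _ _ => rfl⟩
  haveI hexpN : (L.lhomWithConstants N).IsExpansionOn M := ⟨fun _ _ => rfl, fun _ _ => rfl⟩
  haveI hdiagP : M ⊨ L.elementaryDiagram P := (φP.onTheory_model _).1 hMP
  haveI hdiagN : M ⊨ L.elementaryDiagram N := (φN.onTheory_model _).1 hMN
  exact ⟨M, iM, ⟨ElementaryEmbedding.ofModelsElementaryDiagram L P M⟩,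
    ⟨ElementaryEmbedding.ofModelsElementaryDiagram L N M⟩⟩

end Amalgam

/-- Over a finite vocabulary, two structures `N` and `P` are
elementarily equivalent iff there exist an elementary extension `R` of `P`
and an elementary embedding of `N` into `R`. -/
theorem elementarilyEquivalent_iff_common_elemExt [Finite L.Symbols]
    (N P : Type w) [L.Structure N] [L.Structure P] [Nonempty N] [Nonempty P] :
    N ≅[L] P ↔
      ∃ (R : Type (max u v w)) (iR : L.Structure R), ElemEquivWitness N P R iR := by
  constructor
  · intro h
    obtain ⟨R, iR, hR⟩ := exists_common_elementary_extension N P h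
    exact ⟨R, iR, hR⟩
  · rintro ⟨R, iR, ⟨fP⟩, ⟨fN⟩⟩
    exact (fN.elementarilyEquivalent : L.completeTheory N = _).trans
      (fP.elementarilyEquivalent : L.completeTheory P = _).symm

end LTGen
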